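/- The space Q_1^-Λ^k on a cube K admits the direct sum decomposition Q_1^-Λ^k(K) = R(d^{k-1}, Q_1^-Λ^{k-1}) ⊕ κ R(d^k, Q_1^-Λ^k), i.e., it is the direct sum of exact forms from Q_1^-Λ^{k-1} and the Koszul image of the range of d^k on Q_1^-Λ^k. -/

import Mathlib

open MvPolynomial Finset MeasureTheory

/-- Strictly increasing `k`-indices in `{1,…,n}`, modelled as `k`-element subsets of `Fin n`. -/
abbrev Idx (n k : ℕ) := {s : Finset (Fin n) // s.card = k}

/-- A differential `k`-form with polynomial coefficients on `ℝⁿ`: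
one polynomial coefficient for each increasing `k`-index. -/
abbrev Form (n k : ℕ) := Idx n k → MvPolynomial (Fin n) ℝ

/-- The sign `(-1)^{#\{j ∈ s : j < i\}}`. -/
noncomputable def sgn {n : ℕ} (s : Finset (Fin n)) (i : Fin n) : ℝ :=
  (-1) ^ (s.filter (· < i)).card

def eraseIdx {n k : ℕ} (s : Idx n (k+1)) {i : Fin n} (hi : i ∈ s.1) : Idx n k :=
  ⟨s.1.erase i, by simp [Finset.card_erase_of_mem hi, s.2]⟩

def insertIdx {n k : ℕ} (s : Idx n k) {i : Fin n} (hi : i ∉ s.1) : Idx n (k+1) :=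
  ⟨insert i s.1, by simp [Finset.card_insert_of_notMem hi, s.2]⟩

/-- The exterior derivative `d^k`. -/
noncomputable def extd (n k : ℕ) : Form n k →ₗ[ℝ] Form n (k+1) where
  toFun ω := fun s => ∑ i ∈ s.1.attach, sgn s.1 i.1 • pderiv i.1 (ω (eraseIdx s i.2))
  map_add' ω η := by
    funext s
    simp [Finset.sum_add_distrib, smul_add]
  map_smul' c ω := by
    funext s
    simp only [Pi.smul_apply, RingHom.id_apply]
    rw [Finset.smul_sum]
    exact Finset.sum_congr rfl (fun i _ => by rw [(pderiv i.1).map_smul, smul_comm])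

/-- The Koszul operator `κ` (contraction with the position vector field). -/
noncomputable def koszul (n k : ℕ) : Form n (k+1) →ₗ[ℝ] Form n k where
  toFun ω := fun s =>
    ∑ i ∈ (s.1ᶜ).attach, sgn s.1 i.1 • (X i.1 * ω (insertIdx s (Finset.mem_compl.mp i.2)))
  map_add' ω η := by
    funext s
    simp [Finset.sum_add_distrib, mul_add, smul_add]
  map_smul' c ω := by
    funext s
    simp only [Pi.smul_apply, RingHom.id_apply, mul_smul_comm]
    rw [Finset.smul_sum]
    exact Finset.sum_congr rfl (fun i _ => (smul_comm _ _ _))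

/-- The codifferential `δ_{k+1}` (the formal adjoint of `d^k` on Euclidean `ℝⁿ`,
which coincides with `(-1)^{(k+1)n} ⋆ d^{n-k-1} ⋆`). -/
noncomputable def codiff (n k : ℕ) : Form n (k+1) →ₗ[ℝ] Form n k where
  toFun ω := fun s =>
    -∑ i ∈ (s.1ᶜ).attach, sgn s.1 i.1 • pderiv i.1 (ω (insertIdx s (Finset.mem_compl.mp i.2)))
  map_add' ω η := by
    funext s
    simp [Finset.sum_add_distrib, smul_add]
    ring
  map_smul' c ω := by
    funext s
    simp only [Pi.smul_apply, RingHom.id_apply, smul_neg, neg_inj]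
    rw [Finset.smul_sum]
    exact Finset.sum_congr rfl (fun i _ => by rw [(pderiv i.1).map_smul, smul_comm])

/-- The operator `κ^δ = ⋆ ∘ κ ∘ ⋆` (exterior multiplication by `Σ xᵢ dxⁱ`, up to sign). -/
noncomputable def kappaDelta (n k : ℕ) : Form n k →ₗ[ℝ] Form n (k+1) where
  toFun ω := fun s => ∑ i ∈ s.1.attach, sgn s.1 i.1 • (X i.1 * ω (eraseIdx s i.2))
  map_add' ω η := by
    funext s
    simp [Finset.sum_add_distrib, mul_add, smul_add]
  map_smul' c ω := by
    funext s
    simp only [Pi.smul_apply, RingHom.id_apply, mul_smul_comm]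
    rw [Finset.smul_sum]
    exact Finset.sum_congr rfl (fun i _ => (smul_comm _ _ _))

/-- Sign of the permutation `(t, tᶜ) ↦ (1,…,n)`, i.e. `⋆ dx^t = starSign t · dx^{tᶜ}`. -/
noncomputable def starSign {n : ℕ} (t : Finset (Fin n)) : ℝ :=
  (-1) ^ (∑ i ∈ t, ((tᶜ).filter (· < i)).card)

/-- The Hodge star operator on `k`-forms on `ℝⁿ`, `k + l = n`. -/
noncomputable def hodge (n k l : ℕ) (h : k + l = n) : Form n k →ₗ[ℝ] Form n l where
  toFun ω := fun s => starSign (s.1ᶜ) •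
    ω ⟨s.1ᶜ, by rw [Finset.card_compl, s.2, Fintype.card_fin]; omega⟩
  map_add' ω η := by funext s; simp [smul_add]
  map_smul' c ω := by funext s; simp only [Pi.smul_apply, RingHom.id_apply]; rw [smul_comm]

/-- The monomial form `x_τ dx^σ`. -/
noncomputable def monForm (n k : ℕ) (τ : Finset (Fin n)) (σ : Idx n k) : Form n k :=
  fun s => if s = σ then ∏ i ∈ τ, X i else 0

/-- `Q_1^-Λ^k = span{ x_τ dx^σ : |σ| = k, 0 ≤ |τ| ≤ n-k, τ ⊆ σᶜ }`. -/
noncomputable def Qm (n k : ℕ) : Submodule ℝ (Form n k) :=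
  Submodule.span ℝ
    {ω | ∃ (τ : Finset (Fin n)) (σ : Idx n k), τ.card ≤ n - k ∧ τ ⊆ (σ.1)ᶜ ∧ ω = monForm n k τ σ}

/-- `Q_1^{*,-}Λ^k = span{ x_τ' dx^σ' : |σ'| = k, 0 ≤ |τ'| ≤ k, τ' ⊆ σ' }`. -/
noncomputable def Qs (n k : ℕ) : Submodule ℝ (Form n k) :=
  Submodule.span ℝ
    {ω | ∃ (τ : Finset (Fin n)) (σ : Idx n k), τ.card ≤ k ∧ τ ⊆ σ.1 ∧ ω = monForm n k τ σ}

/-- `P_0Λ^k`: forms with constant coefficients. -/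
noncomputable def P0 (n k : ℕ) : Submodule ℝ (Form n k) :=
  Submodule.span ℝ {ω | ∃ σ : Idx n k, ω = monForm n k ∅ σ}

/-- The Whitney space `P_1^-Λ^k = P_0Λ^k + κ(P_0Λ^{k+1})`. -/
noncomputable def Pm (n k : ℕ) : Submodule ℝ (Form n k) :=
  P0 n k ⊔ Submodule.map (koszul n k) (P0 n (k+1))

/-- The star Whitney space `P_1^{*,-}Λ^{k+1} = P_0Λ^{k+1} + κ^δ(P_0Λ^k)`. -/
noncomputable def PsS (n k : ℕ) : Submodule ℝ (Form n (k+1)) :=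
  P0 n (k+1) ⊔ Submodule.map (kappaDelta n k) (P0 n k)

/-- `L²` inner product of `k`-forms on the centered box `[-r, r]`. -/
noncomputable def binner (n k : ℕ) (r : Fin n → ℝ) (ω η : Form n k) : ℝ :=
  ∑ s : Idx n k, ∫ x in Set.Icc (fun i => -(r i)) r, eval x (ω s * η s)

/-- `L²` inner product of `k`-forms on the reference cube `T = [-1,1]ⁿ`. -/
noncomputable def finner (n k : ℕ) (ω η : Form n k) : ℝ :=
  binner n k (fun _ => (1 : ℝ)) ω η

lemma sum_attach_dite {α M : Type*} [AddCommMonoid M] [Fintype α] [DecidableEq α]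
    (s : Finset α) (f : ∀ i ∈ s, M) :
    ∑ i ∈ s.attach, f i.1 i.2 = ∑ i : α, if h : i ∈ s then f i h else 0 := by
  have h1 : ∑ i ∈ s.attach, f i.1 i.2
      = ∑ i ∈ s.attach, (if h : (i : α) ∈ s then f i h else 0) :=
    Finset.sum_congr rfl fun i _ => (dif_pos i.2).symm
  have h2 : (∑ i ∈ s.attach, (if h : (i : α) ∈ s then f i h else 0))
      = ∑ i ∈ s, (if h : i ∈ s then f i h else 0) :=
    Finset.sum_attach s (fun i => if h : i ∈ s then f i h else 0)
  have h3 : (∑ i ∈ s, (if h : i ∈ s then f i h else 0))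
      = ∑ i : α, (if h : i ∈ s then f i h else 0) :=
    (Finset.sum_subset (f := fun i => if h : i ∈ s then f i h else 0)
      (Finset.subset_univ s) (fun x _ hx => dif_neg hx))
  rw [h1, h2, h3]

lemma extd_apply {n k : ℕ} (ω : Form n k) (s : Idx n (k+1)) :
    extd n k ω s = ∑ i : Fin n,
      if h : i ∈ s.1 then sgn s.1 i • pderiv i (ω (eraseIdx s h)) else 0 :=
  sum_attach_dite s.1 (fun i h => sgn s.1 i • pderiv i (ω (eraseIdx s h)))

lemma koszul_apply {n k : ℕ} (ω : Form n (k+1)) (s : Idx n k) :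
    koszul n k ω s = ∑ i : Fin n,
      if h : i ∈ s.1ᶜ then sgn s.1 i • (X i * ω (insertIdx s (Finset.mem_compl.mp h))) else 0 :=
  sum_attach_dite s.1ᶜ (fun i h => sgn s.1 i • (X i * ω (insertIdx s (Finset.mem_compl.mp h))))

lemma sgn_sq {n : ℕ} (s : Finset (Fin n)) (i : Fin n) : sgn s i * sgn s i = 1 := by
  rw [sgn, ← pow_add]
  exact Even.neg_one_pow ⟨_, rfl⟩

lemma sgn_erase_self {n : ℕ} (s : Finset (Fin n)) (i : Fin n) :
    sgn (s.erase i) i = sgn s i := by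
  rw [sgn, sgn, Finset.filter_erase, Finset.erase_eq_of_notMem]
  simp

lemma sgn_insert_self {n : ℕ} (s : Finset (Fin n)) (i : Fin n) :
    sgn (insert i s) i = sgn s i := by
  rw [sgn, sgn, Finset.filter_insert, if_neg (lt_irrefl i)]

lemma sgn_erase {n : ℕ} (s : Finset (Fin n)) (i m : Fin n) (hi : i ∈ s) :
    sgn (s.erase i) m = (if i < m then -1 else 1) * sgn s m := by
  rw [sgn, sgn, Finset.filter_erase]
  by_cases h : i < m
  · have hmem : i ∈ s.filter (fun x => x < m) := Finset.mem_filter.mpr ⟨hi, h⟩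
    rw [if_pos h, Finset.card_erase_of_mem hmem]
    have : (s.filter (fun x => x < m)).card = ((s.filter (fun x => x < m)).card - 1) + 1 := by
      have := Finset.card_pos.mpr ⟨i, hmem⟩
      omega
    conv_rhs => rw [this]
    rw [pow_succ]
    ring
  · have hnm : i ∉ s.filter (fun x => x < m) := fun hm => h (Finset.mem_filter.mp hm).2
    rw [if_neg h, Finset.erase_eq_of_notMem hnm, one_mul]

lemma sgn_insert {n : ℕ} (s : Finset (Fin n)) (i m : Fin n) (hm : m ∉ s) :
    sgn (insert m s) i = (if m < i then -1 else 1) * sgn s i := by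
  rw [sgn, sgn, Finset.filter_insert]
  by_cases h : m < i
  · rw [if_pos h, if_pos h,
      Finset.card_insert_of_notMem (fun hh => hm (Finset.mem_filter.mp hh).1), pow_succ]
    ring
  · rw [if_neg h, if_neg h, one_mul]

lemma sum_sum_antisymm {α : Type*} {M : Type*} [Fintype α] [AddCommGroup M] [Module ℝ M]
    (T : α → α → M) (h : ∀ i m, T i m = - T m i) : ∑ i : α, ∑ m : α, T i m = 0 := by
  have key : (∑ i : α, ∑ m : α, T i m) = - ∑ i : α, ∑ m : α, T i m := by
    conv_lhs => rw [Finset.sum_comm]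
    rw [← Finset.sum_neg_distrib]
    exact Finset.sum_congr rfl fun i _ => by
      rw [← Finset.sum_neg_distrib]
      exact Finset.sum_congr rfl fun m _ => h m i
  have h2 : (2:ℝ) • (∑ i : α, ∑ m : α, T i m) = 0 := by
    rw [two_smul]
    nth_rewrite 1 [key]
    abel
  simpa using (smul_eq_zero.mp h2).resolve_left (by norm_num)


lemma pderiv_pderiv_comm {n : ℕ} (i j : Fin n) (p : MvPolynomial (Fin n) ℝ) :
    pderiv i (pderiv j p) = pderiv j (pderiv i p) := by
  induction p using MvPolynomial.induction_on' with
  | monomial e c =>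
    rcases eq_or_ne i j with rfl | hij
    · rfl
    · simp only [pderiv_monomial, Finsupp.coe_tsub, Pi.sub_apply, Finsupp.single_apply,
        hij, hij.symm, if_false, tsub_zero, tsub_right_comm]
      ring_nf
  | add p q hp hq => simp [hp, hq]

lemma euler_monomial {n : ℕ} (i : Fin n) (e : Fin n →₀ ℕ) (c : ℝ) :
    X i * pderiv i (monomial e c) = (e i : ℝ) • monomial e c := by
  rw [pderiv_monomial]
  rcases Nat.eq_zero_or_pos (e i) with h | h
  · simp [h]
  · have key : Finsupp.single i 1 + (e - Finsupp.single i 1) = e := by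
      ext j
      rcases eq_or_ne j i with rfl | hj
      · simp [Finsupp.single_apply]; omega
      · simp [Finsupp.single_apply, (Ne.symm hj)]
    rw [X, monomial_mul, smul_monomial, key]
    congr 1
    rw [smul_eq_mul]; ring

lemma euler_coeff {n : ℕ} (i : Fin n) (p : MvPolynomial (Fin n) ℝ) (d : Fin n →₀ ℕ) :
    coeff d (X i * pderiv i p) = (d i : ℝ) * coeff d p := by
  induction p using MvPolynomial.induction_on' with
  | monomial e c =>
    rw [euler_monomial, coeff_smul, coeff_monomial]
    rcases eq_or_ne e d with rfl | h
    · simp [smul_eq_mul]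
    · simp [h]
  | add p q hp hq => simp [mul_add, hp, hq, mul_add]

lemma euler_eigen_zero {n k : ℕ} (p : MvPolynomial (Fin n) ℝ)
    (h : ∑ i : Fin n, X i * pderiv i p = -((k : ℝ) + 1) • p) : p = 0 := by
  ext d
  have h1 := congrArg (coeff d) h
  rw [coeff_smul, smul_eq_mul] at h1
  simp only [MvPolynomial.coeff_sum] at h1
  have h2 : (∑ i : Fin n, (d i : ℝ)) * coeff d p = -((k : ℝ) + 1) * coeff d p := by
    rw [← h1, Finset.sum_mul]
    exact Finset.sum_congr rfl fun i _ => (euler_coeff i p d).symm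
  have h3 : ((∑ i : Fin n, (d i : ℝ)) + ((k : ℝ) + 1)) * coeff d p = 0 := by linarith [h2]
  have h4 : (0:ℝ) < (∑ i : Fin n, (d i : ℝ)) + ((k : ℝ) + 1) := by positivity
  rcases mul_eq_zero.mp h3 with h5 | h5
  · exact absurd h5 (ne_of_gt h4)
  · simpa using h5

lemma dite_sum {β M : Type*} [AddCommMonoid M] {c : Prop} [Decidable c] {t : Finset β}
    (f : c → β → M) :
    (if h : c then ∑ m ∈ t, f h m else 0) = ∑ m ∈ t, if h : c then f h m else 0 := by
  split_ifs with h
  · rfl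
  · simp

lemma mem_erase_symm {n : ℕ} {s : Finset (Fin n)} {i m : Fin n}
    (hi : i ∈ s) (hm : m ∈ s.erase i) : m ∈ s ∧ i ∈ s.erase m := by
  rw [Finset.mem_erase] at hm ⊢
  exact ⟨hm.2, fun h => hm.1 h.symm, hi⟩

lemma eps_antisymm {i m : Fin n} (h : i ≠ m) :
    (if i < m then (-1:ℝ) else 1) = -(if m < i then (-1:ℝ) else 1) := by
  rcases lt_trichotomy i m with h1 | h1 | h1
  · simp [h1, asymm h1]
  · exact absurd h1 h
  · simp [h1, asymm h1, not_lt_of_gt h1]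

lemma extd_extd {n k : ℕ} (ω : Form n k) : extd n (k+1) (extd n k ω) = 0 := by
  funext s
  rw [extd_apply]
  have step : ∀ i : Fin n,
      (if h : i ∈ s.1 then sgn s.1 i • pderiv i (extd n k ω (eraseIdx s h)) else 0)
      = ∑ m : Fin n, (if h : i ∈ s.1 then
          (if h' : m ∈ (eraseIdx s h).1 then
            (sgn s.1 i * sgn (s.1.erase i) m) •
              pderiv i (pderiv m (ω (eraseIdx (eraseIdx s h) h'))) else 0) else 0) := by
    intro i
    rw [← dite_sum]
    by_cases h : i ∈ s.1
    · rw [dif_pos h, dif_pos h]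
      rw [extd_apply, map_sum, Finset.smul_sum]
      refine Finset.sum_congr rfl fun m _ => ?_
      by_cases h' : m ∈ (eraseIdx s h).1
      · rw [dif_pos h', dif_pos h', Derivation.map_smul, smul_smul]
        try rfl
      · rw [dif_neg h', dif_neg h', map_zero, smul_zero]
    · rw [dif_neg h, dif_neg h]
  rw [Finset.sum_congr rfl (fun i _ => step i)]
  refine sum_sum_antisymm _ (fun i m => ?_)
  by_cases hi : i ∈ s.1
  · by_cases hm' : m ∈ (eraseIdx s hi).1
    · have hm : m ∈ s.1 := (Finset.mem_erase.mp hm').2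
      have him : m ≠ i := (Finset.mem_erase.mp hm').1
      have hi' : i ∈ (eraseIdx s hm).1 := Finset.mem_erase.mpr ⟨him.symm, hi⟩
      rw [dif_pos hi, dif_pos hm', dif_pos hm, dif_pos hi']
      have harg : eraseIdx (eraseIdx s hi) hm' = eraseIdx (eraseIdx s hm) hi' :=
        Subtype.ext Finset.erase_right_comm
      rw [harg, pderiv_pderiv_comm, ← neg_smul]
      congr 1
      rw [sgn_erase s.1 i m hi, sgn_erase s.1 m i hm, eps_antisymm him.symm]
      ring
    · rw [dif_pos hi, dif_neg hm']
      by_cases hm : m ∈ s.1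
      · have hmi : m = i := by
          by_contra hne
          exact hm' (Finset.mem_erase.mpr ⟨hne, hm⟩)
        subst hmi
        have : ¬ m ∈ (eraseIdx s hm).1 := by
          intro hh
          exact (Finset.mem_erase.mp hh).1 rfl
        rw [dif_pos hm, dif_neg this, neg_zero]
      · rw [dif_neg hm, neg_zero]
  · rw [dif_neg hi]
    by_cases hm : m ∈ s.1
    · have : ¬ i ∈ (eraseIdx s hm).1 := fun h => hi (Finset.mem_erase.mp h).2
      rw [dif_pos hm, dif_neg this, neg_zero]
    · rw [dif_neg hm, neg_zero]

lemma koszul_koszul {n k : ℕ} (ω : Form n (k+2)) : koszul n k (koszul n (k+1) ω) = 0 := by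
  funext s
  rw [koszul_apply]
  have step : ∀ i : Fin n,
      (if h : i ∈ s.1ᶜ then
        sgn s.1 i • (X i * koszul n (k+1) ω (insertIdx s (Finset.mem_compl.mp h))) else 0)
      = ∑ m : Fin n, (if h : i ∈ s.1ᶜ then
          (if h' : m ∈ (insertIdx s (Finset.mem_compl.mp h)).1ᶜ then
            (sgn s.1 i * sgn (insert i s.1) m) •
              (X i * (X m * ω (insertIdx (insertIdx s (Finset.mem_compl.mp h))
                (Finset.mem_compl.mp h')))) else 0) else 0) := by
    intro i
    rw [← dite_sum]
    by_cases h : i ∈ s.1ᶜ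
    · rw [dif_pos h, dif_pos h]
      rw [koszul_apply, Finset.mul_sum, Finset.smul_sum]
      refine Finset.sum_congr rfl fun m _ => ?_
      by_cases h' : m ∈ (insertIdx s (Finset.mem_compl.mp h)).1ᶜ
      · rw [dif_pos h', dif_pos h', mul_smul_comm, smul_smul]
        rfl
      · rw [dif_neg h', dif_neg h', mul_zero, smul_zero]
    · rw [dif_neg h, dif_neg h]
  rw [Finset.sum_congr rfl (fun i _ => step i)]
  refine sum_sum_antisymm _ (fun i m => ?_)
  by_cases hi : i ∈ s.1ᶜ
  · by_cases hm' : m ∈ (insertIdx s (Finset.mem_compl.mp hi)).1ᶜ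
    · have hmis : m ∉ insert i s.1 := Finset.mem_compl.mp hm'
      have hm : m ∈ s.1ᶜ := Finset.mem_compl.mpr (fun hh => hmis (Finset.mem_insert_of_mem hh))
      have him : m ≠ i := fun hh => hmis (hh ▸ Finset.mem_insert_self i s.1)
      have hi' : i ∈ (insertIdx s (Finset.mem_compl.mp hm)).1ᶜ := by
        refine Finset.mem_compl.mpr (fun hh => ?_)
        rcases Finset.mem_insert.mp hh with h1 | h1
        · exact him h1.symm
        · exact (Finset.mem_compl.mp hi) h1
      rw [dif_pos hi, dif_pos hm', dif_pos hm, dif_pos hi']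
      have harg : insertIdx (insertIdx s (Finset.mem_compl.mp hi)) (Finset.mem_compl.mp hm')
          = insertIdx (insertIdx s (Finset.mem_compl.mp hm)) (Finset.mem_compl.mp hi') :=
        Subtype.ext (Finset.insert_comm m i s.1)
      rw [harg, mul_left_comm, ← neg_smul]
      congr 1
      rw [sgn_insert s.1 m i (Finset.mem_compl.mp hi), sgn_insert s.1 i m (Finset.mem_compl.mp hm),
        eps_antisymm him.symm]
      ring
    · rw [dif_pos hi, dif_neg hm']
      have hmis : m ∈ insert i s.1 := not_not.mp (fun hh => hm' (Finset.mem_compl.mpr hh))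
      rcases Finset.mem_insert.mp hmis with h1 | h1
      · subst h1
        rw [dif_pos hi]
        have : ¬ m ∈ (insertIdx s (Finset.mem_compl.mp hi)).1ᶜ := by
          intro hh
          exact (Finset.mem_compl.mp hh) (Finset.mem_insert_self m s.1)
        rw [dif_neg this, neg_zero]
      · rw [dif_neg (by simpa using h1 : ¬ m ∈ s.1ᶜ), neg_zero]
  · rw [dif_neg hi]
    by_cases hm : m ∈ s.1ᶜ
    · have : ¬ i ∈ (insertIdx s (Finset.mem_compl.mp hm)).1ᶜ := by
        intro hh
        exact (Finset.mem_compl.mp hh) (Finset.mem_insert_of_mem (not_not.mp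
          (fun hh2 => hi (Finset.mem_compl.mpr hh2))))
      rw [dif_pos hm, dif_neg this, neg_zero]
    · rw [dif_neg hm, neg_zero]

lemma homotopy {n k : ℕ} (ω : Form n (k+1)) (s : Idx n (k+1)) :
    extd n k (koszul n k ω) s + koszul n (k+1) (extd n (k+1) ω) s
      = ((k:ℝ)+1) • ω s + ∑ i : Fin n, X i * pderiv i (ω s) := by
  rw [extd_apply (koszul n k ω) s, koszul_apply (extd n (k+1) ω) s]
  have stepA : ∀ i : Fin n,
      (if h : i ∈ s.1 then sgn s.1 i • pderiv i (koszul n k ω (eraseIdx s h)) else 0)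
      = ∑ m : Fin n, (if h : i ∈ s.1 then
          (if h' : m ∈ (eraseIdx s h).1ᶜ then
            (sgn s.1 i * sgn (s.1.erase i) m) •
              pderiv i (X m * ω (insertIdx (eraseIdx s h) (Finset.mem_compl.mp h')))
          else 0) else 0) := by
    intro i
    rw [← dite_sum]
    by_cases h : i ∈ s.1
    · rw [dif_pos h, dif_pos h, koszul_apply, map_sum, Finset.smul_sum]
      refine Finset.sum_congr rfl fun m _ => ?_
      by_cases h' : m ∈ (eraseIdx s h).1ᶜ
      · rw [dif_pos h', dif_pos h', Derivation.map_smul, smul_smul]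
        rfl
      · rw [dif_neg h', dif_neg h', map_zero, smul_zero]
    · rw [dif_neg h, dif_neg h]
  have stepB : ∀ m : Fin n,
      (if h : m ∈ s.1ᶜ then
        sgn s.1 m • (X m * extd n (k+1) ω (insertIdx s (Finset.mem_compl.mp h))) else 0)
      = ∑ i : Fin n, (if h : m ∈ s.1ᶜ then
          (if h' : i ∈ (insertIdx s (Finset.mem_compl.mp h)).1 then
            (sgn s.1 m * sgn (insert m s.1) i) •
              (X m * pderiv i (ω (eraseIdx (insertIdx s (Finset.mem_compl.mp h)) h')))
          else 0) else 0) := by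
    intro m
    rw [← dite_sum]
    by_cases h : m ∈ s.1ᶜ
    · rw [dif_pos h, dif_pos h, extd_apply, Finset.mul_sum, Finset.smul_sum]
      refine Finset.sum_congr rfl fun i _ => ?_
      by_cases h' : i ∈ (insertIdx s (Finset.mem_compl.mp h)).1
      · rw [dif_pos h', dif_pos h', mul_smul_comm, smul_smul]
        rfl
      · rw [dif_neg h', dif_neg h', mul_zero, smul_zero]
    · rw [dif_neg h, dif_neg h]
  rw [Finset.sum_congr rfl (fun i _ => stepA i), Finset.sum_congr rfl (fun m _ => stepB m)]
  rw [Finset.sum_comm (s := Finset.univ) (t := Finset.univ)]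
  simp only [← Finset.sum_add_distrib]
  have key : ∀ i m : Fin n,
      ((if h : i ∈ s.1 then
          (if h' : m ∈ (eraseIdx s h).1ᶜ then
            (sgn s.1 i * sgn (s.1.erase i) m) •
              pderiv i (X m * ω (insertIdx (eraseIdx s h) (Finset.mem_compl.mp h')))
          else 0) else 0)
        + (if h : m ∈ s.1ᶜ then
          (if h' : i ∈ (insertIdx s (Finset.mem_compl.mp h)).1 then
            (sgn s.1 m * sgn (insert m s.1) i) •
              (X m * pderiv i (ω (eraseIdx (insertIdx s (Finset.mem_compl.mp h)) h')))
          else 0) else 0))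
      = if m = i then ((if i ∈ s.1 then ω s else 0) + X i * pderiv i (ω s)) else 0 := by
    intro i m
    by_cases him : m = i
    · subst him
      rw [if_pos rfl]
      by_cases hm : m ∈ s.1
      · have h' : m ∈ (eraseIdx s hm).1ᶜ :=
          Finset.mem_compl.mpr (Finset.notMem_erase m s.1)
        rw [dif_pos hm, dif_pos h', dif_neg (by simpa using hm), add_zero, if_pos hm]
        have harg : insertIdx (eraseIdx s hm) (Finset.mem_compl.mp h') = s :=
          Subtype.ext (Finset.insert_erase hm)
        rw [harg]
        have hsgn : sgn s.1 m * sgn (s.1.erase m) m = 1 := by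
          rw [sgn_erase_self]; exact sgn_sq _ _
        rw [hsgn, one_smul, pderiv_mul, pderiv_X_self, one_mul]
      · have hm' : m ∈ s.1ᶜ := Finset.mem_compl.mpr hm
        have h' : m ∈ (insertIdx s (Finset.mem_compl.mp hm')).1 := Finset.mem_insert_self m s.1
        rw [dif_neg hm, dif_pos hm', dif_pos h', zero_add, if_neg hm, zero_add]
        have harg : eraseIdx (insertIdx s (Finset.mem_compl.mp hm')) h' = s :=
          Subtype.ext (Finset.erase_insert hm)
        rw [harg]
        have hsgn : sgn s.1 m * sgn (insert m s.1) m = 1 := by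
          rw [sgn_insert_self]; exact sgn_sq _ _
        rw [hsgn, one_smul]
    · rw [if_neg him]
      by_cases hi : i ∈ s.1
      · by_cases hm : m ∈ s.1
        · have h1 : ¬ m ∈ (eraseIdx s hi).1ᶜ := by
            intro hh
            exact (Finset.mem_compl.mp hh) (Finset.mem_erase.mpr ⟨him, hm⟩)
          rw [dif_pos hi, dif_neg h1, dif_neg (by simpa using hm), add_zero]
        · have h' : m ∈ (eraseIdx s hi).1ᶜ :=
            Finset.mem_compl.mpr (fun hh => hm (Finset.mem_erase.mp hh).2)
          have hm' : m ∈ s.1ᶜ := Finset.mem_compl.mpr hm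
          have h'' : i ∈ (insertIdx s (Finset.mem_compl.mp hm')).1 :=
            Finset.mem_insert_of_mem hi
          rw [dif_pos hi, dif_pos h', dif_pos hm', dif_pos h'']
          have harg : insertIdx (eraseIdx s hi) (Finset.mem_compl.mp h')
              = eraseIdx (insertIdx s (Finset.mem_compl.mp hm')) h'' :=
            Subtype.ext (Finset.erase_insert_of_ne him).symm
          rw [harg, pderiv_mul, pderiv_X_of_ne him, zero_mul, zero_add, ← add_smul]
          have hsgn : sgn s.1 i * sgn (s.1.erase i) m + sgn s.1 m * sgn (insert m s.1) i = 0 := by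
            rw [sgn_erase s.1 i m hi, sgn_insert s.1 i m (Finset.mem_compl.mp hm'),
              eps_antisymm (fun hh : i = m => him hh.symm)]
            ring
          rw [hsgn, zero_smul]
      · rw [dif_neg hi, zero_add]
        by_cases hm : m ∈ s.1ᶜ
        · have h1 : ¬ i ∈ (insertIdx s (Finset.mem_compl.mp hm)).1 := by
            intro hh
            rcases Finset.mem_insert.mp hh with h2 | h2
            · exact him h2.symm
            · exact hi h2
          rw [dif_pos hm, dif_neg h1]
        · rw [dif_neg hm]
  rw [Finset.sum_congr rfl (fun m _ => Finset.sum_congr rfl (fun i _ => key i m))]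
  have sumite : ∀ m : Fin n,
      (∑ i : Fin n, if m = i then ((if i ∈ s.1 then ω s else 0) + X i * pderiv i (ω s)) else 0)
      = (if m ∈ s.1 then ω s else 0) + X m * pderiv m (ω s) := by
    intro m
    rw [Finset.sum_ite_eq Finset.univ m
      (fun i => (if i ∈ s.1 then ω s else 0) + X i * pderiv i (ω s))]
    rw [if_pos (Finset.mem_univ m)]
  rw [Finset.sum_congr rfl (fun m _ => sumite m), Finset.sum_add_distrib]
  congr 1
  rw [Finset.sum_ite_mem Finset.univ s.1 (fun _ => ω s), Finset.univ_inter, Finset.sum_const, s.2,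
    ← Nat.cast_smul_eq_nsmul ℝ]
  push_cast
  rfl

lemma pderiv_prod_X_not_mem {n : ℕ} {i : Fin n} {τ : Finset (Fin n)} (hi : i ∉ τ) :
    pderiv i (∏ j ∈ τ, X j : MvPolynomial (Fin n) ℝ) = 0 := by
  classical
  induction τ using Finset.induction_on with
  | empty => simp
  | @insert a t ha ih =>
    rw [Finset.prod_insert ha, pderiv_mul,
      ih (fun h => hi (Finset.mem_insert_of_mem h)),
      pderiv_X_of_ne (fun h : a = i => hi (h ▸ Finset.mem_insert_self a t))]
    simp

lemma pderiv_prod_X {n : ℕ} (i : Fin n) (τ : Finset (Fin n)) :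
    pderiv i (∏ j ∈ τ, X j : MvPolynomial (Fin n) ℝ)
      = if i ∈ τ then ∏ j ∈ τ.erase i, X j else 0 := by
  by_cases hi : i ∈ τ
  · rw [if_pos hi, ← Finset.mul_prod_erase τ _ hi, pderiv_mul, pderiv_X_self, one_mul,
      pderiv_prod_X_not_mem (Finset.notMem_erase i τ), mul_zero, add_zero]
  · rw [if_neg hi, pderiv_prod_X_not_mem hi]

lemma euler_prod_X {n : ℕ} (τ : Finset (Fin n)) :
    ∑ i : Fin n, X i * pderiv i (∏ j ∈ τ, X j : MvPolynomial (Fin n) ℝ)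
      = (τ.card : ℝ) • ∏ j ∈ τ, X j := by
  have expand : ∀ i : Fin n, X i * pderiv i (∏ j ∈ τ, X j : MvPolynomial (Fin n) ℝ)
      = if i ∈ τ then X i * ∏ j ∈ τ.erase i, X j else 0 := by
    intro i
    rw [pderiv_prod_X]
    by_cases hi : i ∈ τ
    · rw [if_pos hi, if_pos hi]
    · rw [if_neg hi, if_neg hi, mul_zero]
  rw [Finset.sum_congr rfl (fun i _ => expand i),
    Finset.sum_ite_mem Finset.univ τ (fun i => X i * ∏ j ∈ τ.erase i, X j), Finset.univ_inter]
  have : ∀ i ∈ τ, X i * ∏ j ∈ τ.erase i, X j = (∏ j ∈ τ, X j : MvPolynomial (Fin n) ℝ) :=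
    fun i hi => Finset.mul_prod_erase τ X hi
  rw [Finset.sum_congr rfl this, Finset.sum_const, ← Nat.cast_smul_eq_nsmul ℝ]

lemma monForm_apply {n k : ℕ} (τ : Finset (Fin n)) (σ s : Idx n k) :
    monForm n k τ σ s = if s = σ then ∏ i ∈ τ, X i else 0 := rfl

lemma extd_monForm_mem {n k : ℕ} (τ : Finset (Fin n)) (σ : Idx n k)
    (hτc : τ.card ≤ n - k) (hτ : τ ⊆ σ.1ᶜ) :
    extd n k (monForm n k τ σ) ∈ Qm n (k+1) := by
  have hmem : ∀ i ∈ τ, i ∉ σ.1 := fun i hi => Finset.mem_compl.mp (hτ hi)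
  have heq : extd n k (monForm n k τ σ)
      = ∑ i ∈ τ.attach, sgn (insert i.1 σ.1) i.1 •
          monForm n (k+1) (τ.erase i.1) (insertIdx σ (hmem i.1 i.2)) := by
    funext s
    rw [extd_apply]
    have rhs : (∑ i ∈ τ.attach, sgn (insert i.1 σ.1) i.1 •
          monForm n (k+1) (τ.erase i.1) (insertIdx σ (hmem i.1 i.2))) s
        = ∑ i ∈ τ.attach, sgn (insert i.1 σ.1) i.1 •
            monForm n (k+1) (τ.erase i.1) (insertIdx σ (hmem i.1 i.2)) s := by
      rw [Finset.sum_apply]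
      rfl
    rw [rhs, sum_attach_dite τ (fun i h => sgn (insert i σ.1) i •
      monForm n (k+1) (τ.erase i) (insertIdx σ (hmem i h)) s)]
    refine Finset.sum_congr rfl fun i _ => ?_
    by_cases hs : i ∈ s.1
    · rw [dif_pos hs]
      by_cases hσ : eraseIdx s hs = σ
      · have hval : monForm n k τ σ (eraseIdx s hs) = ∏ j ∈ τ, X j := by
          rw [monForm_apply, if_pos hσ]
        rw [hval, pderiv_prod_X]
        have hs1 : s.1 = insert i σ.1 := by
          have := congrArg Subtype.val hσ
          simp only [eraseIdx] at this
          rw [← this, Finset.insert_erase hs]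
        by_cases hiτ : i ∈ τ
        · rw [if_pos hiτ, dif_pos hiτ]
          have hcond : s = insertIdx σ (hmem i hiτ) := Subtype.ext hs1
          rw [monForm_apply, if_pos hcond]
          congr 1
          rw [hs1]
        · rw [if_neg hiτ, dif_neg hiτ, smul_zero]
      · have h0 : monForm n k τ σ (eraseIdx s hs) = 0 := by
          rw [monForm_apply, if_neg hσ]
        rw [h0, map_zero, smul_zero]
        by_cases hiτ : i ∈ τ
        · rw [dif_pos hiτ]
          have : ¬ s = insertIdx σ (hmem i hiτ) := by
            intro hh
            apply hσ
            apply Subtype.ext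
            show s.1.erase i = σ.1
            have : s.1 = insert i σ.1 := congrArg Subtype.val hh
            rw [this, Finset.erase_insert (hmem i hiτ)]
          rw [monForm_apply, if_neg this, smul_zero]
        · rw [dif_neg hiτ]
    · rw [dif_neg hs]
      by_cases hiτ : i ∈ τ
      · rw [dif_pos hiτ]
        have : ¬ s = insertIdx σ (hmem i hiτ) := by
          intro hh
          have : s.1 = insert i σ.1 := congrArg Subtype.val hh
          exact hs (this ▸ Finset.mem_insert_self i σ.1)
        rw [monForm_apply, if_neg this, smul_zero]
      · rw [dif_neg hiτ]
  rw [heq]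
  refine Submodule.sum_mem _ fun i _ => Submodule.smul_mem _ _ (Submodule.subset_span ?_)
  refine ⟨τ.erase i.1, insertIdx σ (hmem i.1 i.2), ?_, ?_, rfl⟩
  · rw [Finset.card_erase_of_mem i.2]
    have h1 : τ.card ≤ n - k := hτc
    omega
  · intro j hj
    have hjτ : j ∈ τ := (Finset.mem_erase.mp hj).2
    have hji : j ≠ i.1 := (Finset.mem_erase.mp hj).1
    refine Finset.mem_compl.mpr (fun hh => ?_)
    rcases Finset.mem_insert.mp hh with h2 | h2
    · exact hji h2
    · exact (hmem j hjτ) h2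

lemma koszul_monForm_mem {n k : ℕ} (τ : Finset (Fin n)) (σ : Idx n (k+1))
    (hτc : τ.card ≤ n - (k+1)) (hτ : τ ⊆ σ.1ᶜ) :
    koszul n k (monForm n (k+1) τ σ) ∈ Qm n k := by
  have hkn : k + 1 ≤ n := by
    have := Finset.card_le_univ σ.1
    rw [σ.2] at this
    simpa using this
  have hmem : ∀ i ∈ σ.1, i ∉ τ := fun i hi hit => Finset.mem_compl.mp (hτ hit) hi
  have heq : koszul n k (monForm n (k+1) τ σ)
      = ∑ m ∈ σ.1.attach, sgn (σ.1.erase m.1) m.1 •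
          monForm n k (insert m.1 τ) (eraseIdx σ m.2) := by
    funext s
    rw [koszul_apply]
    have rhs : (∑ m ∈ σ.1.attach, sgn (σ.1.erase m.1) m.1 •
          monForm n k (insert m.1 τ) (eraseIdx σ m.2)) s
        = ∑ m ∈ σ.1.attach, sgn (σ.1.erase m.1) m.1 •
            monForm n k (insert m.1 τ) (eraseIdx σ m.2) s := by
      rw [Finset.sum_apply]
      rfl
    rw [rhs, sum_attach_dite σ.1 (fun m h => sgn (σ.1.erase m) m •
      monForm n k (insert m τ) (eraseIdx σ h) s)]
    refine Finset.sum_congr rfl fun i _ => ?_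
    by_cases hs : i ∈ s.1ᶜ
    · rw [dif_pos hs]
      by_cases hσ : insertIdx s (Finset.mem_compl.mp hs) = σ
      · have hs1 : insert i s.1 = σ.1 := congrArg Subtype.val hσ
        have hiσ : i ∈ σ.1 := hs1 ▸ Finset.mem_insert_self i s.1
        rw [dif_pos hiσ]
        have hval : monForm n (k+1) τ σ (insertIdx s (Finset.mem_compl.mp hs)) = ∏ j ∈ τ, X j := by
          rw [monForm_apply, if_pos hσ]
        rw [hval]
        have hse : σ.1.erase i = s.1 := by
          rw [← hs1, Finset.erase_insert (Finset.mem_compl.mp hs)]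
        have hcond : s = eraseIdx σ hiσ := Subtype.ext hse.symm
        rw [monForm_apply, if_pos hcond, hse]
        rw [Finset.prod_insert (hmem i hiσ)]
      · have hval : monForm n (k+1) τ σ (insertIdx s (Finset.mem_compl.mp hs)) = 0 := by
          rw [monForm_apply, if_neg hσ]
        rw [hval, mul_zero, smul_zero]
        by_cases hiσ : i ∈ σ.1
        · rw [dif_pos hiσ]
          have : ¬ s = eraseIdx σ hiσ := by
            intro hh
            apply hσ
            apply Subtype.ext
            show insert i s.1 = σ.1
            have hv : s.1 = σ.1.erase i := congrArg Subtype.val hh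
            rw [hv, Finset.insert_erase hiσ]
          rw [monForm_apply, if_neg this, smul_zero]
        · rw [dif_neg hiσ]
    · rw [dif_neg hs]
      have his : i ∈ s.1 := by simpa using hs
      by_cases hiσ : i ∈ σ.1
      · rw [dif_pos hiσ]
        have : ¬ s = eraseIdx σ hiσ := by
          intro hh
          have hv : s.1 = σ.1.erase i := congrArg Subtype.val hh
          rw [hv] at his
          exact Finset.notMem_erase i σ.1 his
        rw [monForm_apply, if_neg this, smul_zero]
      · rw [dif_neg hiσ]
  rw [heq]
  refine Submodule.sum_mem _ fun i _ => Submodule.smul_mem _ _ (Submodule.subset_span ?_)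
  refine ⟨insert i.1 τ, eraseIdx σ i.2, ?_, ?_, rfl⟩
  · rw [Finset.card_insert_of_notMem (hmem i.1 i.2)]
    omega
  · intro j hj
    refine Finset.mem_compl.mpr (fun hh => ?_)
    have hj2 := Finset.mem_erase.mp hh
    rcases Finset.mem_insert.mp hj with h1 | h1
    · exact hj2.1 (h1 ▸ rfl)
    · exact Finset.mem_compl.mp (hτ h1) hj2.2

/-- homotopy decomposition. `Q_1^-Λ^{k+1}` is the direct sum of the exact forms
`R(d^k, Q_1^-Λ^k)` and the Koszul image `κ R(d^{k+1}, Q_1^-Λ^{k+1})`. -/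
theorem stmt4 (n k : ℕ) (hk : k + 1 ≤ n) :
    Disjoint (Submodule.map (extd n k) (Qm n k))
        (Submodule.map (koszul n (k+1)) (Submodule.map (extd n (k+1)) (Qm n (k+1)))) ∧
      Qm n (k+1) =
        Submodule.map (extd n k) (Qm n k) ⊔
          Submodule.map (koszul n (k+1)) (Submodule.map (extd n (k+1)) (Qm n (k+1))) := by
  constructor
  · rw [Submodule.disjoint_def]
    intro ω h1 h2
    obtain ⟨α, hα, rfl⟩ := Submodule.mem_map.mp h1
    obtain ⟨β, hβ, heq⟩ := Submodule.mem_map.mp h2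
    obtain ⟨γ, hγ, rfl⟩ := Submodule.mem_map.mp hβ
    have hd : extd n (k+1) (extd n k α) = 0 := extd_extd α
    have hκ : koszul n k (extd n k α) = 0 := by
      rw [← heq]
      exact koszul_koszul (extd n (k+1) γ)
    funext s
    have hh := homotopy (extd n k α) s
    rw [hκ, hd, map_zero, map_zero] at hh
    simp only [Pi.zero_apply, add_zero] at hh
    have heig : ∑ i : Fin n, X i * pderiv i (extd n k α s)
        = -((k : ℝ) + 1) • extd n k α s := by
      rw [neg_smul]
      exact eq_neg_of_add_eq_zero_right hh.symm
    have := euler_eigen_zero (extd n k α s) heig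
    simpa using this
  · apply le_antisymm
    · refine Submodule.span_le.mpr ?_
      rintro ω ⟨τ, σ, hτc, hτ, rfl⟩
      set c : ℝ := (k:ℝ) + 1 + τ.card with hc
      have hc0 : c ≠ 0 := by positivity
      have hω : monForm n (k+1) τ σ ∈ Qm n (k+1) := Submodule.subset_span ⟨τ, σ, hτc, hτ, rfl⟩
      have hH : extd n k (koszul n k (monForm n (k+1) τ σ))
            + koszul n (k+1) (extd n (k+1) (monForm n (k+1) τ σ))
          = c • monForm n (k+1) τ σ := by
        funext s
        rw [Pi.add_apply, homotopy (monForm n (k+1) τ σ) s, Pi.smul_apply, monForm_apply]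
        by_cases hsσ : s = σ
        · rw [if_pos hsσ, euler_prod_X, ← add_smul, hc]
        · rw [if_neg hsσ]
          simp
      have hfinal : monForm n (k+1) τ σ
          = extd n k (c⁻¹ • koszul n k (monForm n (k+1) τ σ))
            + koszul n (k+1) (c⁻¹ • extd n (k+1) (monForm n (k+1) τ σ)) := by
        rw [LinearMap.map_smul, LinearMap.map_smul, ← smul_add, hH, smul_smul,
          inv_mul_cancel₀ hc0, one_smul]
      rw [SetLike.mem_coe, hfinal]
      refine Submodule.add_mem _ (Submodule.mem_sup_left ?_) (Submodule.mem_sup_right ?_)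
      · exact Submodule.mem_map_of_mem
          (Submodule.smul_mem _ _ (koszul_monForm_mem τ σ hτc hτ))
      · exact Submodule.mem_map_of_mem
          (Submodule.smul_mem _ _ (Submodule.mem_map_of_mem hω))
    · apply sup_le
      · have h1 : Submodule.map (extd n k) (Qm n k) ≤ Qm n (k+1) := by
          unfold Qm
          rw [Submodule.map_span, Submodule.span_le]
          rintro _ ⟨ω, ⟨τ, σ, hτc, hτ, rfl⟩, rfl⟩
          exact extd_monForm_mem τ σ hτc hτ
        exact h1
      · have h1 : Submodule.map (extd n (k+1)) (Qm n (k+1)) ≤ Qm n (k+2) := by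
          unfold Qm
          rw [Submodule.map_span, Submodule.span_le]
          rintro _ ⟨ω, ⟨τ, σ, hτc, hτ, rfl⟩, rfl⟩
          exact extd_monForm_mem τ σ hτc hτ
        have h2 : Submodule.map (koszul n (k+1)) (Qm n (k+2)) ≤ Qm n (k+1) := by
          unfold Qm
          rw [Submodule.map_span, Submodule.span_le]
          rintro _ ⟨ω, ⟨τ, σ, hτc, hτ, rfl⟩, rfl⟩
          exact koszul_monForm_mem τ σ hτc hτ
        exact (Submodule.map_mono h1).trans h2
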